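/- Let $a_1,\ldots,a_n$ be distinct elements of a field $F$, $v_i \in F^*$, $u_i = \prod_{j\neq i}(a_i-a_j)^{-1}$, $\prod_{i=1}^n(x-a_i) = \sum_{j=0}^n c_j x^{n-j}$, and $B \in F^{k\times(n-k)}$. Let $G = [I_k \mid B] V_n V_0$ where $V_n$ is the $n\times n$ Vandermonde matrix $(a_j^i)_{0\leq i\leq n-1}$ and $V_0 = \mathrm{diag}(v_1,\ldots,v_n)$, and let $H = [-J_{n-k}B^{\mathrm{T}} \mid J_{n-k}]\, C\, V_n\, U$ where $J_{n-k}$ is the $(n-k)\times(n-k)$ anti-diagonal permutation matrix, $C$ is the $n\times n$ Hankel matrix with $(i,j)$ entry $c_{n-1-i-j}$ if $i+j \leq n-1$ and $0$ otherwise, and $U = \mathrm{diag}(u_1/v_1,\ldots,u_n/v_n)$. Then $G H^{\mathrm{T}} = 0$ and $\mathrm{rank}(H) = n-k$; hence $H$ is a parity check matrix of the TGRS code generated by $G$. -/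

import Mathlib

open Polynomial Matrix in
/-- Theorem 3: with `G = [I_k | B] V_n V_0` and
`H = [-J_{n-k} Bᵀ | J_{n-k}] C V_n U`, one has `G Hᵀ = 0` and `rank H = n - k`,
so `H` is a parity check matrix of the TGRS code generated by `G`. -/
theorem stmt_14 {F : Type*} [Field F] (n k : ℕ) (hk : 1 ≤ k) (hkn : k < n)
    (a : Fin n → F) (ha : Function.Injective a)
    (v : Fin n → F) (hv : ∀ i, v i ≠ 0)
    (u : Fin n → F)
    (hu : ∀ i, u i = (∏ j ∈ Finset.univ.erase i, (a i - a j))⁻¹)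
    (c : ℕ → F)
    (hc : (∏ i : Fin n, (X - Polynomial.C (a i))) =
      ∑ j ∈ Finset.range (n + 1), Polynomial.C (c j) * X ^ (n - j))
    (b : Fin k → Fin (n - k) → F)
    (eqv : Fin k ⊕ Fin (n - k) ≃ Fin n)
    (heqv : eqv = finSumFinEquiv.trans (finCongr (Nat.add_sub_cancel' hkn.le)))
    (Vn : Matrix (Fin n) (Fin n) F) (hVn : ∀ i j, Vn i j = a j ^ (i : ℕ))
    (J : Matrix (Fin (n - k)) (Fin (n - k)) F)
    (hJ : ∀ i j, J i j = if (i : ℕ) + (j : ℕ) = n - k - 1 then 1 else 0)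
    (Cm : Matrix (Fin n) (Fin n) F)
    (hCm : ∀ i j, Cm i j =
      if (i : ℕ) + (j : ℕ) ≤ n - 1 then c (n - 1 - (i : ℕ) - (j : ℕ)) else 0)
    (G : Matrix (Fin k) (Fin n) F)
    (hG : G = (Matrix.fromCols (1 : Matrix (Fin k) (Fin k) F) (Matrix.of b)).submatrix
        id eqv.symm * Vn * Matrix.diagonal v)
    (H : Matrix (Fin (n - k)) (Fin n) F)
    (hH : H = (Matrix.fromCols (-(J * (Matrix.of b)ᵀ)) J).submatrix id eqv.symm *
        Cm * Vn * Matrix.diagonal (fun i => u i / v i)) :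
    G * Hᵀ = 0 ∧ H.rank = n - k := by
  classical
  set f : F[X] := ∏ i : Fin n, (X - Polynomial.C (a i)) with hfdef
  set g : Fin n → F[X] := fun m => ∏ l ∈ Finset.univ.erase m, (X - Polynomial.C (a l))
    with hgdef
  -- basic nonvanishing
  have hprod : ∀ i : Fin n, (∏ j ∈ Finset.univ.erase i, (a i - a j)) ≠ 0 := by
    intro i
    refine Finset.prod_ne_zero_iff.mpr fun j hj => sub_ne_zero_of_ne fun h => ?_
    exact (Finset.mem_erase.mp hj).1 (ha h).symm
  have hu0 : ∀ i, u i ≠ 0 := fun i => by rw [hu i]; exact inv_ne_zero (hprod i)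
  -- coefficients of f
  have hcoeff : ∀ t, t ≤ n → f.coeff t = c (n - t) := by
    intro t ht
    rw [hc, Polynomial.finset_sum_coeff]
    simp_rw [Polynomial.coeff_C_mul, Polynomial.coeff_X_pow, mul_ite, mul_one, mul_zero]
    rw [Finset.sum_eq_single (n - t)]
    · rw [if_pos (by omega)]
    · intro j hj hne
      have hjn := Finset.mem_range.mp hj
      exact if_neg fun h => hne (by omega)
    · intro h; exact absurd (Finset.mem_range.mpr (by omega)) h
  have hfg : ∀ m : Fin n, f = (X - Polynomial.C (a m)) * g m := fun m =>
    (Finset.mul_prod_erase Finset.univ _ (Finset.mem_univ m)).symm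
  have hgn : ∀ m : Fin n, (g m).coeff n = 0 := by
    intro m
    apply Polynomial.coeff_eq_zero_of_natDegree_lt
    calc (g m).natDegree ≤ ∑ l ∈ Finset.univ.erase m, (X - Polynomial.C (a l)).natDegree :=
          Polynomial.natDegree_prod_le _ _
      _ ≤ ∑ _l ∈ Finset.univ.erase m, 1 :=
          Finset.sum_le_sum (f := fun l => (X - Polynomial.C (a l)).natDegree)
            (g := fun _ => 1) fun l _ => le_of_eq (Polynomial.natDegree_X_sub_C (a l))
      _ = n - 1 := by
          rw [Finset.sum_const, smul_eq_mul, mul_one,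
            Finset.card_erase_of_mem (Finset.mem_univ m), Finset.card_univ, Fintype.card_fin]
      _ < n := by omega
  -- telescoping identity
  have htel : ∀ (m : Fin n) (i : ℕ), i < n →
      ∑ l ∈ Finset.range (n - i), c (n - 1 - i - l) * a m ^ l = (g m).coeff i := by
    intro m i hi
    have hc' : ∀ l, l < n - i →
        c (n - 1 - i - l) = (g m).coeff (i + l) - a m * (g m).coeff (i + l + 1) := by
      intro l hl
      have h1 : n - 1 - i - l = n - (i + l + 1) := by omega
      rw [h1, ← hcoeff (i + l + 1) (by omega), hfg m, sub_mul, Polynomial.coeff_sub,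
        Polynomial.coeff_X_mul, Polynomial.coeff_C_mul]
    calc ∑ l ∈ Finset.range (n - i), c (n - 1 - i - l) * a m ^ l
        = ∑ l ∈ Finset.range (n - i),
            ((g m).coeff (i + l) * a m ^ l - (g m).coeff (i + (l + 1)) * a m ^ (l + 1)) := by
          refine Finset.sum_congr rfl fun l hl => ?_
          rw [hc' l (Finset.mem_range.mp hl)]
          have : i + (l + 1) = i + l + 1 := by omega
          rw [this]; ring
      _ = (g m).coeff (i + 0) * a m ^ 0 - (g m).coeff (i + (n - i)) * a m ^ (n - i) :=
          Finset.sum_range_sub' (fun l => (g m).coeff (i + l) * a m ^ l) (n - i)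
      _ = (g m).coeff i := by
          rw [show i + (n - i) = n by omega, hgn m]
          simp
  -- Cm * Vn entries
  have hCV : ∀ (i m : Fin n), (Cm * Vn) i m = (g m).coeff (i : ℕ) := by
    intro i m
    rw [Matrix.mul_apply]
    simp_rw [hCm, hVn]
    rw [Fin.sum_univ_eq_sum_range
      (fun l => (if (i : ℕ) + l ≤ n - 1 then c (n - 1 - (i : ℕ) - l) else 0) * a m ^ l) n]
    rw [← htel m i i.isLt]
    have hsub : Finset.range (n - (i : ℕ)) ⊆ Finset.range n :=
      Finset.range_subset_range.mpr (by omega)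
    have hzero : ∀ l ∈ Finset.range n, l ∉ Finset.range (n - (i : ℕ)) →
        (if (i : ℕ) + l ≤ n - 1 then c (n - 1 - (i : ℕ) - l) else 0) * a m ^ l = 0 := by
      intro l hl1 hl2
      have h1 := Finset.mem_range.mp hl1
      have h2 : ¬ l < n - (i : ℕ) := fun h => hl2 (Finset.mem_range.mpr h)
      have := i.isLt
      rw [if_neg (by omega), zero_mul]
    rw [← Finset.sum_subset hsub hzero]
    refine Finset.sum_congr rfl fun l hl => ?_
    have h1 := Finset.mem_range.mp hl
    have := i.isLt
    rw [if_pos (by omega)]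
  -- Lagrange interpolation
  have huniv_inj : Set.InjOn a (Finset.univ : Finset (Fin n)) := fun x _ y _ h => ha h
  have hbasis : ∀ m : Fin n, Polynomial.C (u m) * g m = Lagrange.basis Finset.univ a m := by
    intro m
    rw [Lagrange.basis]
    simp_rw [Lagrange.basisDivisor]
    rw [Finset.prod_mul_distrib, ← map_prod, Finset.prod_inv_distrib, ← hu m]
  have hXj : ∀ j : Fin n, ((X : F[X])) ^ (j : ℕ) =
      ∑ m : Fin n, Polynomial.C (a m ^ (j : ℕ)) * (Polynomial.C (u m) * g m) := by
    intro j
    have hdeg : ((X : F[X]) ^ (j : ℕ)).degree < (Finset.univ : Finset (Fin n)).card := by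
      rw [Polynomial.degree_X_pow, Finset.card_univ, Fintype.card_fin]
      exact_mod_cast j.isLt
    have h := Lagrange.eq_interpolate huniv_inj hdeg
    rw [Lagrange.interpolate_apply] at h
    simp_rw [Polynomial.eval_pow, Polynomial.eval_X, hbasis] at h ⊢
    exact h
  -- the key identity
  have key : (Cm * Vn) * (Matrix.diagonal u * Vnᵀ) = 1 := by
    ext i j
    rw [Matrix.mul_apply, Matrix.one_apply]
    have hXc := congrArg (fun p : F[X] => p.coeff (i : ℕ)) (hXj j)
    simp only [Polynomial.finset_sum_coeff, Polynomial.coeff_C_mul,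
      Polynomial.coeff_X_pow] at hXc
    have hterm : ∀ m : Fin n, (Cm * Vn) i m * (Matrix.diagonal u * Vnᵀ) m j =
        a m ^ (j : ℕ) * (u m * (g m).coeff (i : ℕ)) := by
      intro m
      rw [hCV i m, Matrix.diagonal_mul, Matrix.transpose_apply, hVn]
      ring
    rw [Finset.sum_congr rfl fun m _ => hterm m, ← hXc]
    simp [Fin.ext_iff, eq_comm]
  have key2 : Vn * Matrix.diagonal u * Vnᵀ * Cmᵀ = 1 := by
    have h := congrArg Matrix.transpose key
    rw [Matrix.transpose_mul, Matrix.transpose_mul, Matrix.transpose_mul,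
      Matrix.transpose_transpose, Matrix.diagonal_transpose, Matrix.transpose_one] at h
    simp only [Matrix.mul_assoc] at h ⊢
    exact h
  -- diagonal computations
  have hDvDu : Matrix.diagonal v * Matrix.diagonal (fun i => u i / v i)
      = Matrix.diagonal u := by
    have hfun : (fun i => v i * (u i / v i)) = u := by
      funext i; rw [mul_comm, div_mul_cancel₀ _ (hv i)]
    rw [Matrix.diagonal_mul_diagonal, hfun]
  have hDE1 : Matrix.diagonal (fun i => u i / v i) *
      Matrix.diagonal (fun i => (u i / v i)⁻¹) = 1 := by
    have hfun : (fun i => (u i / v i) * (u i / v i)⁻¹) = fun _ => (1 : F) :=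
      funext fun i => mul_inv_cancel₀ (div_ne_zero (hu0 i) (hv i))
    rw [Matrix.diagonal_mul_diagonal, hfun, Matrix.diagonal_one]
  have hJJ : J * J = 1 := by
    ext i j
    rw [Matrix.mul_apply, Matrix.one_apply]
    have hi := i.isLt
    have hj := j.isLt
    rw [Finset.sum_eq_single (⟨n - k - 1 - (i : ℕ), by omega⟩ : Fin (n - k))]
    · simp only [hJ]
      rw [if_pos (by omega), one_mul]
      by_cases hij : i = j
      · subst hij; rw [if_pos (by omega), if_pos rfl]
      · rw [if_neg, if_neg hij]
        simp only [Fin.ext_iff] at hij ⊢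
        omega
    · intro l _ hl
      simp only [hJ]
      rw [if_neg, zero_mul]
      intro h
      apply hl
      simp only [Fin.ext_iff] at h ⊢
      omega
    · intro h; exact absurd (Finset.mem_univ _) h
  constructor
  · -- G * Hᵀ = 0
    rw [hG, hH]
    rw [Matrix.transpose_mul, Matrix.transpose_mul, Matrix.transpose_mul,
      Matrix.diagonal_transpose]
    simp only [Matrix.mul_assoc]
    rw [← Matrix.mul_assoc (Matrix.diagonal v) (Matrix.diagonal fun i => u i / v i), hDvDu]
    have key2' : Vn * (Matrix.diagonal u * (Vnᵀ * (Cmᵀ *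
        ((Matrix.fromCols (-(J * (Matrix.of b)ᵀ)) J).submatrix id eqv.symm)ᵀ))) =
        ((Matrix.fromCols (-(J * (Matrix.of b)ᵀ)) J).submatrix id eqv.symm)ᵀ := by
      have := congrArg
        (· * ((Matrix.fromCols (-(J * (Matrix.of b)ᵀ)) J).submatrix id eqv.symm)ᵀ) key2
      simp only [Matrix.mul_assoc, Matrix.one_mul] at this
      exact this
    rw [key2']
    rw [Matrix.transpose_submatrix, Matrix.submatrix_mul_equiv, Matrix.submatrix_id_id]
    rw [Matrix.transpose_fromCols, Matrix.fromCols_mul_fromRows]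
    simp only [Matrix.transpose_neg, Matrix.transpose_mul, Matrix.transpose_transpose,
      Matrix.one_mul]
    exact neg_add_cancel _
  · -- rank
    set Bm := (Matrix.fromCols (-(J * (Matrix.of b)ᵀ)) J).submatrix id eqv.symm with hBm
    set R := (Matrix.fromRows (0 : Matrix (Fin k) (Fin (n - k)) F) J).submatrix
      (⇑eqv.symm) id with hR
    set W := Matrix.diagonal (fun i => (u i / v i)⁻¹) *
      (Matrix.diagonal u * (Vnᵀ * R)) with hW
    have hHW : H * W = 1 := by
      rw [hH, hW]
      simp only [Matrix.mul_assoc]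
      rw [← Matrix.mul_assoc (Matrix.diagonal fun i => u i / v i)
        (Matrix.diagonal fun i => (u i / v i)⁻¹), hDE1, Matrix.one_mul]
      have key' : Cm * (Vn * (Matrix.diagonal u * (Vnᵀ * R))) = R := by
        have := congrArg (· * R) key
        simp only [Matrix.mul_assoc, Matrix.one_mul] at this
        exact this
      rw [key']
      rw [hBm, hR, Matrix.submatrix_mul_equiv, Matrix.submatrix_id_id,
        Matrix.fromCols_mul_fromRows, Matrix.mul_zero, zero_add, hJJ]
    have h1 : H.rank ≤ n - k := by
      have := Matrix.rank_le_card_height H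
      simpa using this
    have h2 : n - k ≤ H.rank := by
      have := Matrix.rank_mul_le_left H W
      rw [hHW, Matrix.rank_one, Fintype.card_fin] at this
      exact this
    exact le_antisymm h1 h2
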